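/- Let s > 1 be an integer and V a finite subgroup of (F, +) of rank s + 1. Then the following are equivalent: (a) there exist α ∈ F^× and a subfield K ⊆ F with p^s elements such that α•K ⊆ V (i.e., the partition of V is (s,1)); (b) d_{i,s+1}(V) = 0 for all i with 1 < i < s, and d_{1,s+1}(V)^p · d_{s,s+1}(V) = d_{s+1,s+1}(V)^p. -/

import Mathlib

open Polynomial

section Helpers
variable {F : Type*} [Field F]

/-- A monic polynomial of degree `card ι` vanishing at `card ι` distinct points
is the product of the corresponding linear factors. -/
lemma eq_prod_of_monic_of_eval {ι : Type*} [Fintype ι] (v : ι → F)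
    (hv : Function.Injective v) (P : F[X]) (hm : P.Monic)
    (hd : P.natDegree = Fintype.card ι) (hr : ∀ i, P.eval (v i) = 0) :
    P = ∏ i, (X - C (v i)) := by
  set Q : F[X] := ∏ i, (X - C (v i)) with hQ
  have hQm : Q.Monic := monic_prod_of_monic _ _ fun i _ => monic_X_sub_C (v i)
  have hQd : Q.natDegree = Fintype.card ι := by
    rw [hQ, natDegree_prod _ _ fun i _ => (monic_X_sub_C (v i)).ne_zero]
    simp
  have hQr : ∀ i, Q.eval (v i) = 0 := by
    intro i
    rw [hQ, eval_prod]
    exact Finset.prod_eq_zero (Finset.mem_univ i) (by simp)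
  rcases eq_or_ne (P - Q) 0 with h | h
  · exact sub_eq_zero.mp h
  · exfalso
    apply h
    apply eq_zero_of_natDegree_lt_card_of_eval_eq_zero _ hv
    · intro i; simp [hr i, hQr i]
    · have hdeg : (P - Q).degree < P.degree := by
        apply degree_sub_lt _ hm.ne_zero (by rw [hm.leadingCoeff, hQm.leadingCoeff])
        rw [degree_eq_natDegree hm.ne_zero, degree_eq_natDegree hQm.ne_zero, hd, hQd]
      have := natDegree_lt_natDegree h hdeg
      omega


lemma monic_pow_sub_mul_X {n : ℕ} (hn : 1 < n) (c : F) :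
    (X ^ n - C c * X : F[X]).Monic ∧ (X ^ n - C c * X : F[X]).natDegree = n := by
  have hdlt : (C c * X : F[X]).degree < (X ^ n : F[X]).degree := by
    apply lt_of_le_of_lt (degree_C_mul_X_le _)
    rw [degree_X_pow]
    exact_mod_cast hn
  have hdeg : (X ^ n - C c * X : F[X]).degree = (X ^ n : F[X]).degree :=
    degree_sub_eq_left_of_degree_lt hdlt
  constructor
  · have h1 : (C c * X : F[X]).degree < ((n - 1 : ℕ) + 1 : ℕ) :=
      lt_of_le_of_lt (degree_C_mul_X_le c) (by exact_mod_cast (by omega : 1 < n - 1 + 1))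
    have h2 := monic_X_pow_sub h1
    rwa [Nat.sub_add_cancel (by omega)] at h2
  · rw [natDegree_eq_of_degree_eq hdeg, natDegree_X_pow]

/-- Upper bound: a type injecting into the roots of a nonzero polynomial. -/
lemma nat_card_le_natDegree {γ : Type*} (w : γ → F) (hw : Function.Injective w)
    (g : F[X]) (hg : g ≠ 0) (h : ∀ x, g.eval (w x) = 0) :
    Nat.card γ ≤ g.natDegree := by
  classical
  have hmem : ∀ x : γ, w x ∈ g.roots.toFinset := by
    intro x
    rw [Multiset.mem_toFinset, mem_roots hg]
    exact h x
  have hinj : Function.Injective (fun x : γ => (⟨w x, hmem x⟩ : {y // y ∈ g.roots.toFinset})) :=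
    fun a b hab => hw (congrArg Subtype.val hab)
  calc Nat.card γ ≤ Nat.card {y // y ∈ g.roots.toFinset} :=
        Nat.card_le_card_of_injective _ hinj
    _ = g.roots.toFinset.card := by rw [Nat.card_eq_fintype_card, Fintype.card_coe]
    _ ≤ Multiset.card g.roots := Multiset.toFinset_card_le _
    _ ≤ g.natDegree := Polynomial.card_roots' g

lemma finite_of_roots {γ : Type*} (w : γ → F) (hw : Function.Injective w)
    (g : F[X]) (hg : g ≠ 0) (h : ∀ x, g.eval (w x) = 0) : Finite γ := by
  classical
  have hmem : ∀ x : γ, w x ∈ g.roots.toFinset := by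
    intro x
    rw [Multiset.mem_toFinset, mem_roots hg]
    exact h x
  exact Finite.of_injective (fun x : γ => (⟨w x, hmem x⟩ : {y // y ∈ g.roots.toFinset}))
    (fun a b hab => hw (congrArg Subtype.val hab))

lemma exists_ne_zero_of_one_lt_card {M : Type*} [AddGroup M] (H : AddSubgroup M)
    (h : 1 < Nat.card H) : ∃ x : H, (x : M) ≠ 0 := by
  by_contra hc
  push_neg at hc
  have : Subsingleton H := ⟨fun a b => Subtype.ext (by rw [hc a, hc b])⟩
  have h2 := Nat.card_eq_one_iff_unique.mpr ⟨this, ⟨0⟩⟩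
  omega


section CharPHelpers
variable (p : ℕ) [Fact p.Prime] [CharP F p]

lemma natCast_pow_char (m : ℕ) : ((m : F)) ^ p = (m : F) := by
  have hp := (Fact.out : p.Prime)
  induction m with
  | zero => push_cast; exact zero_pow hp.ne_zero
  | succ n ihn => push_cast [add_pow_char, ihn, one_pow]; ring

lemma natCast_inj_lt {i j : ℕ} (hi : i < p) (hj : j < p) (h : (i : F) = (j : F)) :
    i = j := by
  have := (CharP.natCast_eq_natCast F p).mp h
  have h2 : i % p = j % p := this
  rwa [Nat.mod_eq_of_lt hi, Nat.mod_eq_of_lt hj] at h2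

/-- The additive map `x ↦ x ^ p ^ n - A * x`. -/
noncomputable def frobSub (n : ℕ) (A : F) : F →+ F where
  toFun x := x ^ p ^ n - A * x
  map_zero' := by
    have hp := (Fact.out : p.Prime)
    simp [zero_pow (pow_ne_zero n hp.ne_zero)]
  map_add' x y := by
    show (x + y) ^ p ^ n - A * (x + y) = (x ^ p ^ n - A * x) + (y ^ p ^ n - A * y)
    rw [add_pow_char_pow]; ring

@[simp] lemma frobSub_apply (n : ℕ) (A : F) (x : F) :
    frobSub p n A x = x ^ p ^ n - A * x := rfl


set_option linter.unusedSectionVars false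

lemma prod_subgroup_shape : ∀ (r : ℕ) (E : AddSubgroup F) (_ : Fintype E),
    Nat.card E = p ^ r →
    ∃ a : ℕ → F, a 0 = 1 ∧
      (∏ c : E, (X - C (c : F))) = ∑ i ∈ Finset.range (r + 1), C (a i) * X ^ p ^ (r - i) := by
  intro r
  induction r with
  | zero =>
    intro E _ hE
    refine ⟨fun _ => 1, rfl, ?_⟩
    have hc1 : Fintype.card E = 1 := by rw [← Nat.card_eq_fintype_card, hE, pow_zero]
    haveI : Subsingleton E := Fintype.card_le_one_iff_subsingleton.mp (by omega)
    have hz : ∀ c : E, (c : F) = 0 := fun c => by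
      rw [Subsingleton.elim c 0]; rfl
    calc ∏ c : E, (X - C (c : F)) = ∏ _c : E, (X - C (0 : F)) := by
          apply Finset.prod_congr rfl; intro c _; rw [hz c]
      _ = (X - C 0) ^ Fintype.card E := by rw [Finset.prod_const, Finset.card_univ]
      _ = X := by rw [hc1, pow_one, map_zero, sub_zero]
      _ = _ := by simp
  | succ r ih =>
    intro E _ hE
    classical
    have hp := (Fact.out : p.Prime)
    have hp1 : 1 < p := hp.one_lt
    -- a nonzero element of E
    have hlt : 1 < Nat.card E := by
      rw [hE]; exact Nat.one_lt_pow (Nat.succ_ne_zero r) hp1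
    obtain ⟨c₀, hc₀⟩ := exists_ne_zero_of_one_lt_card E hlt
    set c : F := (c₀ : F) ^ (p - 1) with hcdef
    set θ : F →+ F := frobSub p 1 c with hθdef
    have hθ : ∀ x : F, θ x = x ^ p - c * x := by
      intro x; rw [hθdef, frobSub_apply, pow_one]
    set gp : F[X] := X ^ p - C c * X with hgp
    obtain ⟨hgpm, hgpd⟩ := monic_pow_sub_mul_X (F := F) hp1 c
    -- the image subgroup
    set E'' : AddSubgroup F := E.map θ with hE''
    haveI : Finite E'' := by
      apply Finite.of_surjective
        (fun x : E => (⟨θ x, AddSubgroup.mem_map_of_mem θ x.2⟩ : E''))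
      rintro ⟨y, hy⟩
      rw [hE'', AddSubgroup.mem_map] at hy
      obtain ⟨x, hx, rfl⟩ := hy
      exact ⟨⟨x, hx⟩, rfl⟩
    haveI : Fintype E'' := Fintype.ofFinite _
    -- the kernel of θ restricted to E
    set kθ := (θ.domRestrict E).ker with hkθ
    -- kernel has cardinality p
    have hker_le : Nat.card kθ ≤ p := by
      refine le_trans (nat_card_le_natDegree (fun x : kθ => ((x : E) : F))
        (fun a b hab => Subtype.ext (Subtype.ext hab)) gp hgpm.ne_zero ?_) (le_of_eq hgpd)
      rintro ⟨x, hx⟩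
      have := AddMonoidHom.mem_ker.mp hx
      rw [AddMonoidHom.domRestrict_apply] at this
      rw [hgp]
      simp only [eval_sub, eval_pow, eval_X, eval_mul, eval_C]
      rw [← hθ]; exact this
    have hker_ge : p ≤ Nat.card kθ := by
      have hmem : ∀ i : Fin p, ((i : ℕ) • c₀ : E) ∈ kθ := by
        intro i
        rw [hkθ, AddMonoidHom.mem_ker, AddMonoidHom.domRestrict_apply]
        push_cast
        rw [hθ, nsmul_eq_mul]
        have h1 : ((i : ℕ) : F) ^ p = ((i : ℕ) : F) := natCast_pow_char p _
        have h2 : c * (c₀ : F) = (c₀ : F) ^ p := by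
          rw [hcdef, ← pow_succ, Nat.sub_add_cancel hp.one_le]
        rw [mul_pow, h1]
        calc ((i:ℕ):F) * (c₀:F) ^ p - c * (((i:ℕ):F) * (c₀:F))
            = ((i:ℕ):F) * ((c₀:F) ^ p - c * (c₀:F)) := by ring
          _ = 0 := by rw [h2]; ring
      have hinj : Function.Injective (fun i : Fin p => (⟨(i : ℕ) • c₀, hmem i⟩ : kθ)) := by
        intro i j hij
        have h1 : ((i : ℕ) • c₀ : E) = ((j : ℕ) • c₀ : E) := congrArg Subtype.val hij
        have h2 : ((i : ℕ) : F) * (c₀ : F) = ((j : ℕ) : F) * (c₀ : F) := by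
          have := congrArg (Subtype.val) h1
          push_cast at this
          rwa [nsmul_eq_mul, nsmul_eq_mul] at this
        have h3 : ((i : ℕ) : F) = ((j : ℕ) : F) := mul_right_cancel₀ hc₀ h2
        exact Fin.ext (natCast_inj_lt p i.2 j.2 h3)
      calc p = Nat.card (Fin p) := by simp
        _ ≤ Nat.card kθ := Nat.card_le_card_of_injective _ hinj
    have hker : Nat.card kθ = p := le_antisymm hker_le hker_ge
    -- cardinality of image
    have hcard_eq : Nat.card E = Nat.card E'' * Nat.card kθ := by
      rw [AddSubgroup.card_eq_card_quotient_mul_card_addSubgroup kθ]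
      congr 1
      rw [hE'', ← AddMonoidHom.restrict_range (K := E) θ]
      exact Nat.card_congr (QuotientAddGroup.quotientKerEquivRange (θ.domRestrict E)).toEquiv
    have hE''card : Nat.card E'' = p ^ r := by
      rw [hE, hker, pow_succ] at hcard_eq
      have hppos : 0 < p := hp.pos
      exact Nat.eq_of_mul_eq_mul_right hppos hcard_eq.symm
    -- inductive hypothesis
    obtain ⟨a, ha0, hG⟩ := ih E'' inferInstance hE''card
    set G : F[X] := ∏ c : E'', (X - C (c : F)) with hGdef
    -- the product over E equals G.comp gp
    have hcomp : (∏ c : E, (X - C (c : F))) = G.comp gp := by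
      have := eq_prod_of_monic_of_eval (fun x : E => (x : F)) Subtype.val_injective
        (G.comp gp) ?_ ?_ ?_
      · exact this.symm
      · exact (monic_prod_of_monic _ _ fun i _ => monic_X_sub_C _).comp hgpm (by rw [hgpd]; omega)
      · rw [natDegree_comp, hgpd]
        have : G.natDegree = p ^ r := by
          rw [hGdef, natDegree_prod _ _ fun i _ => (monic_X_sub_C _).ne_zero]
          simp [← Nat.card_eq_fintype_card, hE''card]
        rw [hGdef] at this ⊢
        rw [this, ← pow_succ, ← Nat.card_eq_fintype_card, hE]
      · intro v
        rw [eval_comp]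
        have hgpv : gp.eval (v : F) = θ (v : F) := by
          rw [hgp, hθ]; simp
        rw [hgpv, hGdef, eval_prod]
        have hmem : θ (v : F) ∈ E'' := AddSubgroup.mem_map_of_mem θ v.2
        exact Finset.prod_eq_zero (Finset.mem_univ (⟨θ (v : F), hmem⟩ : E'')) (by simp)
    -- expand the composition
    have hstep : G.comp gp = ∑ i ∈ Finset.range (r + 1), C (a i) * gp ^ p ^ (r - i) := by
      rw [hG, Polynomial.comp, Polynomial.eval₂_finset_sum]
      refine Finset.sum_congr rfl fun i _ => ?_
      rw [eval₂_mul, eval₂_C, eval₂_X_pow]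
    have hgppow : ∀ i, i ≤ r → gp ^ p ^ (r - i)
        = X ^ p ^ (r + 1 - i) - C (c ^ p ^ (r - i)) * X ^ p ^ (r - i) := by
      intro i hi
      have hexp : p * p ^ (r - i) = p ^ (r + 1 - i) := by
        rw [Nat.succ_sub hi, pow_succ, mul_comm]
      rw [hgp, sub_pow_char_pow, mul_pow, ← C_pow, ← pow_mul, hexp]
    refine ⟨fun i => (if i ≤ r then a i else 0) -
      (if i = 0 then 0 else a (i - 1) * c ^ p ^ (r + 1 - i)), by simp [ha0], ?_⟩
    rw [hcomp, hstep]
    symm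
    calc ∑ i ∈ Finset.range (r + 2),
          C ((if i ≤ r then a i else 0) -
            (if i = 0 then 0 else a (i - 1) * c ^ p ^ (r + 1 - i))) * X ^ p ^ (r + 1 - i)
        = (∑ i ∈ Finset.range (r + 2), C (if i ≤ r then a i else 0) * X ^ p ^ (r + 1 - i))
          - ∑ i ∈ Finset.range (r + 2),
              C (if i = 0 then 0 else a (i - 1) * c ^ p ^ (r + 1 - i)) * X ^ p ^ (r + 1 - i) := by
          rw [← Finset.sum_sub_distrib]
          refine Finset.sum_congr rfl fun i _ => ?_
          rw [map_sub, sub_mul]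
      _ = (∑ i ∈ Finset.range (r + 1), C (a i) * X ^ p ^ (r + 1 - i))
          - ∑ i ∈ Finset.range (r + 1), C (a i * c ^ p ^ (r - i)) * X ^ p ^ (r - i) := by
          congr 1
          · rw [Finset.sum_range_succ, if_neg (by omega), map_zero, zero_mul, add_zero]
            refine Finset.sum_congr rfl fun i hi => ?_
            rw [if_pos (Nat.lt_succ_iff.mp (Finset.mem_range.mp hi))]
          · rw [Finset.sum_range_succ', if_pos rfl, map_zero, zero_mul, add_zero]
            refine Finset.sum_congr rfl fun i hi => ?_
            rw [if_neg (Nat.succ_ne_zero i)]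
            have h1 : r + 1 - (i + 1) = r - i := by omega
            rw [h1, Nat.add_sub_cancel]
      _ = ∑ i ∈ Finset.range (r + 1), C (a i) * gp ^ p ^ (r - i) := by
          rw [← Finset.sum_sub_distrib]
          refine Finset.sum_congr rfl fun i hi => ?_
          rw [hgppow i (Nat.lt_succ_iff.mp (Finset.mem_range.mp hi)), map_mul]
          ring

lemma coeff_shape_sum (n : ℕ) (a : ℕ → F) (k : ℕ) (hk : k ≤ n) :
    (∑ i ∈ Finset.range (n + 1), C (a i) * X ^ p ^ (n - i)).coeff (p ^ (n - k)) = a k := by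
  have hp := (Fact.out : p.Prime)
  rw [finset_sum_coeff, Finset.sum_eq_single k]
  · rw [coeff_C_mul, coeff_X_pow, if_pos rfl, mul_one]
  · intro i hi hne
    have hi' := Nat.lt_succ_iff.mp (Finset.mem_range.mp hi)
    rw [coeff_C_mul, coeff_X_pow, if_neg, mul_zero]
    intro h
    have h2 := Nat.pow_right_injective hp.two_le h
    exact hne (by omega)
  · intro hk'
    exact absurd (Finset.mem_range.mpr (by omega)) hk'

lemma coeff_one_prod_ne_zero (E : AddSubgroup F) [Fintype E] :
    (∏ c : E, (X - C (c : F))).coeff 1 ≠ 0 := by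
  classical
  have hsplit : (∏ c : E, (X - C (c : F)))
      = (X - C ((0 : E) : F)) * ∏ c ∈ Finset.univ.erase (0 : E), (X - C (c : F)) :=
    (Finset.mul_prod_erase _ _ (Finset.mem_univ _)).symm
  have h0 : ((0 : E) : F) = 0 := rfl
  rw [hsplit, h0, map_zero, sub_zero, coeff_X_mul, coeff_zero_eq_eval_zero, eval_prod]
  apply Finset.prod_ne_zero_iff.mpr
  intro c hc
  simp only [eval_sub, eval_X, eval_C, zero_sub, ne_eq, neg_eq_zero]
  intro h
  exact (Finset.mem_erase.mp hc).1 (Subtype.ext h)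

lemma addsubgroup_card_map_mul_ker (θ : F →+ F) (V : AddSubgroup F) :
    Nat.card V = Nat.card (V.map θ) * Nat.card (θ.domRestrict V).ker := by
  rw [AddSubgroup.card_eq_card_quotient_mul_card_addSubgroup (θ.domRestrict V).ker]
  congr 1
  rw [← AddMonoidHom.restrict_range (K := V) θ]
  exact Nat.card_congr (QuotientAddGroup.quotientKerEquivRange (θ.domRestrict V)).toEquiv

lemma finite_map_of_finite (θ : F →+ F) (V : AddSubgroup F) [Finite V] :
    Finite (V.map θ) := by
  apply Finite.of_surjective (fun x : V => (⟨θ x, AddSubgroup.mem_map_of_mem θ x.2⟩ : V.map θ))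
  rintro ⟨y, hy⟩
  rw [AddSubgroup.mem_map] at hy
  obtain ⟨x, hx, rfl⟩ := hy
  exact ⟨⟨x, hx⟩, rfl⟩

set_option linter.unusedSectionVars true

end CharPHelpers
end Helpers


/-- `dCoef p r i E` is the Dickson-type coefficient `d_{i,r}(E)`: the coefficient of
`X ^ (p ^ (r - i))` in `∏_{c ∈ E} (X - c)`. -/
noncomputable def dCoef {F : Type*} [Field F] (p r i : ℕ)
    (E : AddSubgroup F) [Fintype E] : F :=
  (∏ c : E, (X - C (c : F))).coeff (p ^ (r - i))

set_option maxHeartbeats 1000000 in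
/-- For `s > 1` and a finite subgroup `V` of rank `s + 1`, the partition
of `V` is `(s,1)` — i.e. `V` contains a dilation `α • K` of a subfield `K` with `p ^ s`
elements — iff `d_{i,s+1}(V) = 0` for `1 < i < s` and
`d_{1,s+1}(V)^p * d_{s,s+1}(V) = d_{s+1,s+1}(V)^p`. -/
theorem statement4 {F : Type*} [Field F] {p : ℕ} [Fact p.Prime] [CharP F p]
    (s : ℕ) (hs : 1 < s) (V : AddSubgroup F) [Fintype V]
    (hV : Fintype.card V = p ^ (s + 1)) :
    (∃ α : F, α ≠ 0 ∧ ∃ K : Subfield F, Nat.card K = p ^ s ∧ ∀ x ∈ K, α * x ∈ V) ↔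
      ((∀ i, 1 < i → i < s → dCoef p (s + 1) i V = 0) ∧
        dCoef p (s + 1) 1 V ^ p * dCoef p (s + 1) s V = dCoef p (s + 1) (s + 1) V ^ p) := by
  classical
  have hp := (Fact.out : p.Prime)
  have hp1 : 1 < p := hp.one_lt
  have hps1 : 1 < p ^ s := Nat.one_lt_pow (by omega) hp1
  have hVcard : Nat.card V = p ^ (s + 1) := by rw [Nat.card_eq_fintype_card, hV]
  obtain ⟨a, ha0, hFV⟩ := prod_subgroup_shape p (s + 1) V inferInstance hVcard
  have hd : ∀ i, i ≤ s + 1 → dCoef p (s + 1) i V = a i := by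
    intro i hi
    rw [dCoef, hFV]
    exact coeff_shape_sum p (s + 1) a i hi
  have hlast : a (s + 1) ≠ 0 := by
    have h1 := coeff_one_prod_ne_zero V
    rw [hFV] at h1
    have h2 := coeff_shape_sum p (s + 1) a (s + 1) le_rfl
    rw [Nat.sub_self, pow_zero] at h2
    rw [h2] at h1
    exact h1
  have hneg : ∀ x : F, (-x) ^ p = -(x ^ p) := fun x => by
    rw [neg_pow, neg_one_pow_char]; ring
  have hpe : ∀ x y : ℕ, x ≠ y → (if p ^ x = p ^ y then (1:F) else 0) = 0 :=
    fun x y h => if_neg (fun hc => h (Nat.pow_right_injective hp.two_le hc))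
  constructor
  · rintro ⟨α, hα, K, hK, hαK⟩
    haveI hKfin : Finite K := by
      have h0 : 0 < Nat.card K := by rw [hK]; positivity
      exact (Nat.card_pos_iff.mp h0).2
    haveI : Fintype K := Fintype.ofFinite _
    have hKcard : Fintype.card K = p ^ s := by rw [← Nat.card_eq_fintype_card, hK]
    have hKpow : ∀ x : K, (x : F) ^ p ^ s = (x : F) := by
      intro x
      have h1 := FiniteField.pow_card x
      rw [hKcard] at h1
      exact_mod_cast congrArg Subtype.val h1
    set A : F := α ^ (p ^ s - 1) with hAdef
    have hAα : A * α = α ^ p ^ s := by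
      rw [hAdef, ← pow_succ, Nat.sub_add_cancel (Nat.one_le_pow s p hp.pos)]
    have hA : A ≠ 0 := pow_ne_zero _ hα
    set θ : F →+ F := frobSub p s A with hθdef
    have hθ : ∀ x : F, θ x = x ^ p ^ s - A * x := fun x => rfl
    set g : F[X] := X ^ p ^ s - C A * X with hg
    obtain ⟨hgm, hgd⟩ := monic_pow_sub_mul_X (F := F) hps1 A
    set kθ := (θ.domRestrict V).ker with hkθ
    have hker_le : Nat.card kθ ≤ p ^ s := by
      refine le_trans (nat_card_le_natDegree (fun x : kθ => ((x : V) : F))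
        (fun x y hxy => Subtype.ext (Subtype.ext hxy)) g hgm.ne_zero ?_) (le_of_eq hgd)
      rintro ⟨x, hx⟩
      have h1 := AddMonoidHom.mem_ker.mp hx
      rw [AddMonoidHom.domRestrict_apply] at h1
      rw [hg]
      simp only [eval_sub, eval_pow, eval_X, eval_mul, eval_C]
      rw [← hθ]; exact h1
    have hker_ge : p ^ s ≤ Nat.card kθ := by
      have hmem : ∀ x : K, (⟨α * (x : F), hαK x x.2⟩ : V) ∈ kθ := by
        intro x
        rw [hkθ, AddMonoidHom.mem_ker, AddMonoidHom.domRestrict_apply]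
        show θ (α * (x : F)) = 0
        rw [hθ, mul_pow, hKpow x, ← hAα]
        ring
      have hinj : Function.Injective
          (fun x : K => (⟨⟨α * (x : F), hαK x x.2⟩, hmem x⟩ : kθ)) := by
        intro x y hxy
        have h1 : α * (x : F) = α * (y : F) :=
          congrArg Subtype.val (congrArg Subtype.val hxy)
        exact Subtype.ext (mul_left_cancel₀ hα h1)
      calc p ^ s = Nat.card K := hK.symm
        _ ≤ Nat.card kθ := Nat.card_le_card_of_injective _ hinj
    have hker : Nat.card kθ = p ^ s := le_antisymm hker_le hker_ge
    have hcard_eq := addsubgroup_card_map_mul_ker θ V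
    rw [hVcard, hker] at hcard_eq
    have hmap : Nat.card (V.map θ) = p := by
      have h1 : p * p ^ s = Nat.card (V.map θ) * p ^ s := by
        rw [← hcard_eq, pow_succ, mul_comm]
      exact (Nat.eq_of_mul_eq_mul_right (by positivity) h1).symm
    haveI : Finite (V.map θ) := finite_map_of_finite θ V
    haveI : Fintype (V.map θ) := Fintype.ofFinite _
    obtain ⟨b', hb'⟩ := exists_ne_zero_of_one_lt_card (V.map θ) (by rw [hmap]; exact hp1)
    set b : F := (b' : F) with hbdef
    have hbmem : ∀ i : Fin p, ((i : ℕ) : F) * b ∈ V.map θ := by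
      intro i
      have := (V.map θ).nsmul_mem b'.2 (i : ℕ)
      rwa [nsmul_eq_mul] at this
    have hval : ∀ y : V.map θ, ∃ i : Fin p, (y : F) = ((i : ℕ) : F) * b := by
      have hinj : Function.Injective (fun i : Fin p => (⟨((i : ℕ) : F) * b, hbmem i⟩ : V.map θ)) := by
        intro i j hij
        have h1 : ((i : ℕ) : F) * b = ((j : ℕ) : F) * b := congrArg Subtype.val hij
        have h2 : ((i : ℕ) : F) = ((j : ℕ) : F) := mul_right_cancel₀ hb' h1
        exact Fin.ext (natCast_inj_lt p i.2 j.2 h2)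
      have hbij : Function.Bijective (fun i : Fin p => (⟨((i : ℕ) : F) * b, hbmem i⟩ : V.map θ)) := by
        rw [Fintype.bijective_iff_injective_and_card]
        refine ⟨hinj, ?_⟩
        rw [Fintype.card_fin, ← Nat.card_eq_fintype_card, hmap]
      intro y
      obtain ⟨i, hi⟩ := hbij.2 y
      exact ⟨i, by rw [← hi]⟩
    -- evaluation of the degree-p factor at multiples of b
    have hevalb : ∀ i : Fin p, (((i : ℕ) : F) * b) ^ p - b ^ (p - 1) * (((i : ℕ) : F) * b) = 0 := by
      intro i
      rw [mul_pow, natCast_pow_char p]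
      have hbp : b ^ (p - 1) * b = b ^ p := by
        rw [← pow_succ, Nat.sub_add_cancel hp.one_le]
      calc ((i : ℕ) : F) * b ^ p - b ^ (p - 1) * (((i : ℕ) : F) * b)
          = ((i : ℕ) : F) * b ^ p - ((i : ℕ) : F) * (b ^ (p - 1) * b) := by ring
        _ = 0 := by rw [hbp]; ring
    -- F_V equals the composition
    have hQ : (∏ c : V, (X - C (c : F))) = (X ^ p - C (b ^ (p - 1)) * X).comp g := by
      obtain ⟨hm2, hd2⟩ := monic_pow_sub_mul_X (F := F) hp1 (b ^ (p - 1))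
      refine (eq_prod_of_monic_of_eval (fun x : V => (x : F)) Subtype.val_injective
        _ (hm2.comp hgm (by rw [hgd]; omega)) ?_ ?_).symm
      · rw [natDegree_comp, hd2, hgd, ← pow_succ', hV]
      · intro v
        rw [eval_comp]
        have hgv : g.eval (v : F) = θ (v : F) := by
          rw [hg, hθ]; simp
        rw [hgv]
        have hmem : θ (v : F) ∈ V.map θ := AddSubgroup.mem_map_of_mem θ v.2
        obtain ⟨i, hi⟩ := hval ⟨θ (v : F), hmem⟩
        simp only at hi
        simp only [eval_sub, eval_pow, eval_X, eval_mul, eval_C]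
        rw [hi]
        exact hevalb i
    have hR : (∏ c : V, (X - C (c : F))) =
        X ^ p ^ (s + 1) - C (b ^ (p - 1)) * X ^ p ^ s - C (A ^ p) * X ^ p ^ 1
          + C (A * b ^ (p - 1)) * X ^ p ^ 0 := by
      rw [hQ]
      have hcomp2 : (X ^ p - C (b ^ (p - 1)) * X).comp g = g ^ p - C (b ^ (p - 1)) * g := by
        simp [sub_comp, pow_comp, mul_comp, C_comp, X_comp]
      have hgpp : g ^ p = X ^ p ^ (s + 1) - C (A ^ p) * X ^ p := by
        rw [hg, sub_pow_char, mul_pow, ← C_pow, ← pow_mul, ← pow_succ]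
      rw [hcomp2, hgpp, hg]
      simp only [map_mul]
      ring
    have hcoeffR : ∀ m : ℕ,
        (X ^ p ^ (s + 1) - C (b ^ (p - 1)) * X ^ p ^ s - C (A ^ p) * X ^ p ^ 1
          + C (A * b ^ (p - 1)) * X ^ p ^ 0 : F[X]).coeff m
        = (if m = p ^ (s + 1) then 1 else 0) - b ^ (p - 1) * (if m = p ^ s then 1 else 0)
          - A ^ p * (if m = p ^ 1 then 1 else 0)
          + A * b ^ (p - 1) * (if m = p ^ 0 then 1 else 0) := by
      intro m
      simp only [coeff_add, coeff_sub, coeff_C_mul, coeff_X_pow]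
    have hdc : ∀ i, i ≤ s + 1 → dCoef p (s + 1) i V =
        (if p ^ (s + 1 - i) = p ^ (s + 1) then 1 else 0)
          - b ^ (p - 1) * (if p ^ (s + 1 - i) = p ^ s then 1 else 0)
          - A ^ p * (if p ^ (s + 1 - i) = p ^ 1 then 1 else 0)
          + A * b ^ (p - 1) * (if p ^ (s + 1 - i) = p ^ 0 then 1 else 0) := by
      intro i _
      rw [dCoef, hR, hcoeffR]
    constructor
    · intro i hi1 his
      rw [hdc i (by omega), hpe _ _ (by omega), hpe _ _ (by omega), hpe _ _ (by omega),
        hpe _ _ (by omega)]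
      ring
    · have hd1 : dCoef p (s + 1) 1 V = -(b ^ (p - 1)) := by
        rw [hdc 1 (by omega), hpe _ _ (by omega), if_pos (by congr 1 <;> omega),
          hpe _ _ (by omega), hpe _ _ (by omega)]
        ring
      have hds : dCoef p (s + 1) s V = -(A ^ p) := by
        rw [hdc s (by omega), hpe _ _ (by omega), hpe _ _ (by omega),
          if_pos (by congr 1 <;> omega), hpe _ _ (by omega)]
        ring
      have hds1 : dCoef p (s + 1) (s + 1) V = A * b ^ (p - 1) := by
        rw [hdc (s + 1) le_rfl, hpe _ _ (by omega), hpe _ _ (by omega),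
          hpe _ _ (by omega), if_pos (by congr 1 <;> omega)]
        ring
      rw [hd1, hds, hds1, hneg (b ^ (p - 1)), mul_pow]
      ring
  · rintro ⟨hmid, hrel⟩
    have hamid : ∀ i, 1 < i → i < s → a i = 0 := by
      intro i h1 h2
      rw [← hd i (by omega)]
      exact hmid i h1 h2
    have hrel' : a 1 ^ p * a s = a (s + 1) ^ p := by
      rw [← hd 1 (by omega), ← hd s (by omega), ← hd (s + 1) le_rfl]
      exact hrel
    have ha1 : a 1 ≠ 0 := by
      intro h
      rw [h] at hrel'
      have h2 : a (s + 1) ^ p = 0 := by rw [← hrel', zero_pow hp.ne_zero, zero_mul]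
      exact hlast (pow_eq_zero_iff hp.ne_zero |>.mp h2)
    set A : F := -(a (s + 1)) / a 1 with hAdef
    have hA : A ≠ 0 := by
      rw [hAdef]
      exact div_ne_zero (neg_ne_zero.mpr hlast) ha1
    have hAp : A ^ p = -(a s) := by
      have h1 : a 1 ^ p ≠ 0 := pow_ne_zero _ ha1
      rw [hAdef, div_pow, hneg, ← hrel']
      field_simp
    have hA1 : a 1 * A = -(a (s + 1)) := by
      rw [hAdef]
      field_simp
    set θ : F →+ F := frobSub p s A with hθdef
    have hθ : ∀ x : F, θ x = x ^ p ^ s - A * x := fun x => rfl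
    set g : F[X] := X ^ p ^ s - C A * X with hg
    obtain ⟨hgm, hgd⟩ := monic_pow_sub_mul_X (F := F) hps1 A
    set h2poly : F[X] := X ^ p - C (-(a 1)) * X with hh2
    obtain ⟨hh2m, hh2d⟩ := monic_pow_sub_mul_X (F := F) hp1 (-(a 1))
    -- every θ v is a root of h2poly
    have hroot : ∀ v : V, (θ (v : F)) ^ p + a 1 * θ (v : F) = 0 := by
      intro v
      have hev : (∏ c : V, (X - C (c : F))).eval (v : F) = 0 := by
        rw [eval_prod]
        exact Finset.prod_eq_zero (Finset.mem_univ v) (by simp)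
      rw [hFV, eval_finset_sum] at hev
      have hsum : ∀ i ∈ Finset.range (s + 2),
          (C (a i) * X ^ p ^ (s + 1 - i)).eval (v : F) = a i * (v : F) ^ p ^ (s + 1 - i) := by
        intro i _
        simp
      rw [Finset.sum_congr rfl hsum] at hev
      have hquad : ({0, 1, s, s + 1} : Finset ℕ) ⊆ Finset.range (s + 2) := by
        intro x hx
        simp only [Finset.mem_insert, Finset.mem_singleton] at hx
        rw [Finset.mem_range]
        omega
      rw [← Finset.sum_subset hquad (fun x hx1 hx2 => ?_)] at hev
      swap
      · have hx3 := Finset.mem_range.mp hx1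
        simp only [Finset.mem_insert, Finset.mem_singleton] at hx2
        push_neg at hx2
        rw [hamid x (by omega) (by omega), zero_mul]
      have h01 : (0 : ℕ) ∉ ({1, s, s + 1} : Finset ℕ) := by
        simp only [Finset.mem_insert, Finset.mem_singleton]
        omega
      have h1s : (1 : ℕ) ∉ ({s, s + 1} : Finset ℕ) := by
        simp only [Finset.mem_insert, Finset.mem_singleton]
        omega
      have hss : (s : ℕ) ∉ ({s + 1} : Finset ℕ) := by
        simp only [Finset.mem_singleton]
        omega
      rw [show ({0, 1, s, s + 1} : Finset ℕ) = insert 0 (insert 1 (insert s {s + 1})) from rfl,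
        Finset.sum_insert h01, Finset.sum_insert h1s, Finset.sum_insert hss,
        Finset.sum_singleton] at hev
      rw [show s + 1 - 0 = s + 1 from by omega, show s + 1 - 1 = s from by omega,
        show s + 1 - s = 1 from by omega, show s + 1 - (s + 1) = 0 from by omega,
        ha0, pow_one, pow_zero, pow_one] at hev
      rw [hθ, sub_pow_char, mul_pow, ← pow_mul,
        show p ^ s * p = p ^ (s + 1) from (pow_succ p s).symm]
      linear_combination hev - (v : F) ^ p * hAp - (v : F) * hA1
    -- the kernel of θ on V
    set kθ := (θ.domRestrict V).ker with hkθ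
    have hker_le : Nat.card kθ ≤ p ^ s := by
      refine le_trans (nat_card_le_natDegree (fun x : kθ => ((x : V) : F))
        (fun x y hxy => Subtype.ext (Subtype.ext hxy)) g hgm.ne_zero ?_) (le_of_eq hgd)
      rintro ⟨x, hx⟩
      have h1 := AddMonoidHom.mem_ker.mp hx
      rw [AddMonoidHom.domRestrict_apply] at h1
      rw [hg]
      simp only [eval_sub, eval_pow, eval_X, eval_mul, eval_C]
      rw [← hθ]
      exact h1
    have himg_le : Nat.card (V.map θ) ≤ p := by
      refine le_trans (nat_card_le_natDegree (fun y : V.map θ => (y : F))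
        Subtype.val_injective h2poly hh2m.ne_zero ?_) (le_of_eq hh2d)
      rintro ⟨y, hy⟩
      rw [AddSubgroup.mem_map] at hy
      obtain ⟨v, hv, rfl⟩ := hy
      rw [hh2]
      simp only [eval_sub, eval_pow, eval_X, eval_mul, eval_C]
      have h1 := hroot ⟨v, hv⟩
      have h2 : ((⟨v, hv⟩ : V) : F) = v := rfl
      rw [h2] at h1
      linear_combination h1
    have hcard_eq := addsubgroup_card_map_mul_ker θ V
    rw [hVcard] at hcard_eq
    have hker : Nat.card kθ = p ^ s := by
      have h1 : p ^ (s + 1) ≤ p * Nat.card kθ := by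
        rw [hcard_eq]
        exact Nat.mul_le_mul_right _ himg_le
      rw [pow_succ'] at h1
      have h2 := Nat.le_of_mul_le_mul_left h1 hp.pos
      omega
    -- pick a nonzero kernel element
    obtain ⟨w, hw⟩ := exists_ne_zero_of_one_lt_card kθ (by rw [hker]; exact hps1)
    set α : F := ((w : V) : F) with hαdef
    have hα0 : α ≠ 0 := by
      intro h
      exact hw (Subtype.ext h)
    have hθw : θ α = 0 := by
      have h1 := AddMonoidHom.mem_ker.mp w.2
      rw [AddMonoidHom.domRestrict_apply] at h1
      exact h1
    have hθα : α ^ p ^ s = A * α := by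
      have := hθw
      rw [hθ] at this
      exact sub_eq_zero.mp this
    -- the fixed subfield
    let K : Subfield F :=
      { carrier := {x : F | x ^ p ^ s = x}
        zero_mem' := by
          simp only [Set.mem_setOf_eq]
          exact zero_pow (pow_ne_zero s hp.ne_zero)
        one_mem' := by simp
        add_mem' := by
          intro x y hx hy
          simp only [Set.mem_setOf_eq] at *
          rw [add_pow_char_pow, hx, hy]
        mul_mem' := by
          intro x y hx hy
          simp only [Set.mem_setOf_eq] at *
          rw [mul_pow, hx, hy]
        neg_mem' := by
          intro x hx
          simp only [Set.mem_setOf_eq] at *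
          rw [neg_pow, neg_one_pow_char_pow, hx]
          ring
        inv_mem' := by
          intro x hx
          simp only [Set.mem_setOf_eq] at *
          rw [inv_pow, hx] }
    have hKmem : ∀ x : F, x ∈ K ↔ x ^ p ^ s = x := fun x => Iff.rfl
    set g1 : F[X] := X ^ p ^ s - C (1 : F) * X with hg1
    obtain ⟨hg1m, hg1d⟩ := monic_pow_sub_mul_X (F := F) hps1 (1 : F)
    have hKroot : ∀ x : K, g1.eval (x : F) = 0 := by
      intro x
      rw [hg1]
      simp only [eval_sub, eval_pow, eval_X, eval_mul, eval_C, one_mul]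
      rw [(hKmem (x : F)).mp x.2]
      ring
    haveI : Finite K :=
      finite_of_roots (fun x : K => (x : F)) Subtype.val_injective g1 hg1m.ne_zero hKroot
    have hK_le : Nat.card K ≤ p ^ s :=
      le_trans (nat_card_le_natDegree (fun x : K => (x : F)) Subtype.val_injective
        g1 hg1m.ne_zero hKroot) (le_of_eq hg1d)
    -- each kernel element is A times a K element
    have hkroot : ∀ v : kθ, ((v : V) : F) ^ p ^ s = A * ((v : V) : F) := by
      intro v
      have h1 := AddMonoidHom.mem_ker.mp v.2
      rw [AddMonoidHom.domRestrict_apply] at h1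
      rw [hθ] at h1
      exact sub_eq_zero.mp h1
    have hK_ge : p ^ s ≤ Nat.card K := by
      have hmemK : ∀ v : kθ, α⁻¹ * ((v : V) : F) ∈ K := by
        intro v
        rw [hKmem]
        rw [mul_pow, inv_pow, hθα, hkroot v]
        field_simp
      have hinj : Function.Injective (fun v : kθ => (⟨α⁻¹ * ((v : V) : F), hmemK v⟩ : K)) := by
        intro u v huv
        have h1 : α⁻¹ * ((u : V) : F) = α⁻¹ * ((v : V) : F) := congrArg Subtype.val huv
        exact Subtype.ext (Subtype.ext (mul_left_cancel₀ (inv_ne_zero hα0) h1))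
      calc p ^ s = Nat.card kθ := hker.symm
        _ ≤ Nat.card K := Nat.card_le_card_of_injective _ hinj
    refine ⟨α, hα0, K, le_antisymm hK_le hK_ge, ?_⟩
    intro x hx
    have hgroot : g.eval (α * x) = 0 := by
      rw [hg]
      simp only [eval_sub, eval_pow, eval_X, eval_mul, eval_C]
      rw [mul_pow, hθα, (hKmem x).mp hx]
      ring
    haveI : Fintype kθ := Fintype.ofFinite _
    set R : Finset F := g.roots.toFinset with hR
    have hkθinj : Function.Injective (fun v : kθ => ((v : V) : F)) :=
      fun x y hxy => Subtype.ext (Subtype.ext hxy)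
    have hsubset : Finset.univ.image (fun v : kθ => ((v : V) : F)) ⊆ R := by
      intro y hy
      simp only [Finset.mem_image] at hy
      obtain ⟨v, _, rfl⟩ := hy
      rw [hR, Multiset.mem_toFinset, mem_roots hgm.ne_zero]
      show g.eval _ = 0
      rw [hg]
      simp only [eval_sub, eval_pow, eval_X, eval_mul, eval_C]
      rw [hkroot v]
      ring
    have hcard_img : (Finset.univ.image (fun v : kθ => ((v : V) : F))).card = p ^ s := by
      rw [Finset.card_image_of_injective _ hkθinj, Finset.card_univ,
        ← Nat.card_eq_fintype_card, hker]
    have hRcard : R.card ≤ p ^ s := by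
      rw [hR]
      exact le_trans (Multiset.toFinset_card_le _) (le_trans (card_roots' g) (le_of_eq hgd))
    have hReq : Finset.univ.image (fun v : kθ => ((v : V) : F)) = R :=
      Finset.eq_of_subset_of_card_le hsubset (by omega)
    have hmemR : α * x ∈ R := by
      rw [hR, Multiset.mem_toFinset, mem_roots hgm.ne_zero]
      exact hgroot
    rw [← hReq] at hmemR
    simp only [Finset.mem_image] at hmemR
    obtain ⟨v, _, hv⟩ := hmemR
    rw [← hv]
    exact ((v : V)).2
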